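/- Let K be a compact Hausdorff space, ρ: [0,1] → K a continuous surjection, μ a Borel probability measure on K, and σ the Borel probability measure on [0,1] with σ([0,t]) = μ(ρ([0,t])). Then the push-forward ρ_*σ equals μ. -/
import Mathlib


open MeasureTheory

/-- Let `ρ : [0,1] → K` be a continuous surjection onto a compact Hausdorff
space, `μ` a Borel probability measure on `K`, and `σ` the Borel probability measure on
`[0,1]` with `σ([0,t]) = μ(ρ([0,t]))` for all `t`.  Then `ρ_*σ = μ`. -/
theorem stmt_14 {K : Type*} [TopologicalSpace K] [CompactSpace K] [T2Space K]
    [MeasurableSpace K] [BorelSpace K]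
    (μ : Measure K) [IsProbabilityMeasure μ]
    (ρ : Set.Icc (0:ℝ) 1 → K) (hρc : Continuous ρ) (hρs : Function.Surjective ρ)
    (σ : Measure (Set.Icc (0:ℝ) 1)) [IsProbabilityMeasure σ]
    (hσ : ∀ t : Set.Icc (0:ℝ) 1, σ (Set.Iic t) = μ (ρ '' Set.Iic t)) :
    Measure.map ρ σ = μ := by
  have hfiber : ∀ x : K, ∃ s, IsLeast (ρ ⁻¹' {x}) s := by
    intro x
    have hne : (ρ ⁻¹' {x}).Nonempty := hρs x
    have hc : IsCompact (ρ ⁻¹' {x}) :=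
      (IsClosed.preimage hρc isClosed_singleton).isCompact
    exact hc.exists_isLeast hne
  choose g hg using hfiber
  have hρg : ∀ x, ρ (g x) = x := fun x => (hg x).1
  have himg : ∀ t, g ⁻¹' Set.Iic t = ρ '' Set.Iic t := by
    intro t
    ext x
    simp only [Set.mem_preimage, Set.mem_Iic]
    constructor
    · intro h; exact ⟨g x, h, hρg x⟩
    · rintro ⟨s, hs, rfl⟩
      exact le_trans ((hg (ρ s)).2 (by simp)) hs
  have hmeasImg : ∀ t : Set.Icc (0:ℝ) 1, MeasurableSet (ρ '' Set.Iic t) := by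
    intro t
    have hc : IsCompact (Set.Iic t) := isClosed_Iic.isCompact
    exact ((hc.image hρc).isClosed).measurableSet
  have hgm : Measurable g := by
    apply measurable_of_Iic
    intro t
    rw [himg]
    exact hmeasImg t
  have hmap : Measure.map g μ = σ := by
    refine (Measure.ext_of_Iic σ _ (fun t => ?_)).symm
    rw [Measure.map_apply hgm measurableSet_Iic, himg, hσ]
  calc Measure.map ρ σ = Measure.map ρ (Measure.map g μ) := by rw [hmap]
    _ = Measure.map (ρ ∘ g) μ := Measure.map_map hρc.measurable hgm
    _ = μ := by rw [show ρ ∘ g = id from funext hρg, Measure.map_id]
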